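/- The function h : ℝ → ℝ defined by h(x) = (e^x − x − 1)/x² for x ≠ 0 and h(0) = 1/2 is strictly monotone increasing on all of ℝ. -/

import Mathlib

open Real intervalIntegral MeasureTheory

lemma rep (x : ℝ) :
    (if x = 0 then (1 / 2 : ℝ) else (Real.exp x - x - 1) / x ^ 2) =
      ∫ t in (0:ℝ)..1, (1 - t) * Real.exp (t * x) := by
  rcases eq_or_ne x 0 with rfl | hx
  · simp [mul_comm, integral_sub intervalIntegrable_const intervalIntegral.intervalIntegrable_id]; norm_num
  · rw [if_neg hx]
    have : ∀ t : ℝ, HasDerivAt (fun t : ℝ => (1 - t) * Real.exp (t * x) / x + Real.exp (t * x) / x ^ 2)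
        ((1 - t) * Real.exp (t * x)) t := by
      intro t
      have he : HasDerivAt (fun t : ℝ => Real.exp (t * x)) (Real.exp (t * x) * x) t := by
        exact ((Real.hasDerivAt_exp (t * x)).comp t ((hasDerivAt_id t).mul_const x)).congr_deriv (by ring : Real.exp (t * x) * (1 * x) = Real.exp (t * x) * x)
      have h1 : HasDerivAt (fun t : ℝ => (1 - t) * Real.exp (t * x) / x)
          (((-1) * Real.exp (t * x) + (1 - t) * (Real.exp (t * x) * x)) / x) t := by
        simpa using (((hasDerivAt_const t (1:ℝ)).sub (hasDerivAt_id t)).mul he).div_const x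
      have h2 : HasDerivAt (fun t : ℝ => Real.exp (t * x) / x ^ 2)
          ((Real.exp (t * x) * x) / x ^ 2) t := he.div_const _
      refine (h1.add h2).congr_deriv ?_
      field_simp
      ring
    rw [intervalIntegral.integral_eq_sub_of_hasDerivAt (fun t _ => this t)
      (((continuous_const.sub continuous_id).mul
        ((continuous_id.mul continuous_const).rexp)).intervalIntegrable 0 1)]
    field_simp
    simp only [mul_zero, Real.exp_zero]
    ring


/-- `x ↦ ψ(x)/x²` (with value `1/2` at `0`), where
`ψ(x) = eˣ − x − 1`, is strictly monotone increasing on `ℝ`. -/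
theorem strictMono_expTaylorRem_div_sq :
    StrictMono (fun x : ℝ =>
      if x = 0 then (1 / 2 : ℝ) else (Real.exp x - x - 1) / x ^ 2) := by
  intro x y hxy
  simp only [rep]
  have hi : ∀ z : ℝ, IntervalIntegrable (fun t : ℝ => (1 - t) * Real.exp (t * z)) volume 0 1 :=
    fun z => ((continuous_const.sub continuous_id).mul
      ((continuous_id.mul continuous_const).rexp)).intervalIntegrable 0 1
  rw [← sub_pos, ← intervalIntegral.integral_sub (hi y) (hi x)]
  apply intervalIntegral_pos_of_pos_on (((hi y).sub (hi x)))
  · intro t ht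
    have h1 : (0:ℝ) < 1 - t := by linarith [ht.2]
    have h2 : Real.exp (t * x) < Real.exp (t * y) :=
      Real.exp_lt_exp.2 (by nlinarith [ht.1])
    nlinarith
  · norm_num
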